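/- In the homogeneous value-iteration scheme, if the stage cost has homogeneity degree μ = 0 or the dynamics has homogeneity degree ν = 1, then the bounds are exact: V̲_i(x) = V_i(x) = V̄_i(x) for every iteration i and every state x. -/
import Mathlib


open scoped ENNReal

noncomputable section

def dil {n : ℕ} (r : Fin n → ℝ) (ε : ℝ) (x : Fin n → ℝ) : Fin n → ℝ :=
  fun i => ε ^ (r i) * x i

def dilPow {n : ℕ} (r : Fin n → ℝ) (ε c : ℝ) (x : Fin n → ℝ) : Fin n → ℝ :=
  fun i => ε ^ (c * r i) * x i

theorem stmt8 {n m : ℕ}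
    (f : (Fin n → ℝ) → (Fin m → ℝ) → Fin n → ℝ)
    (ℓ : (Fin n → ℝ) → (Fin m → ℝ) → ℝ≥0∞)
    (r : Fin n → ℝ) (q : Fin m → ℝ) (ν μ : ℝ)
    (hr : ∀ i, 0 < r i) (hq : ∀ j, 0 < q j) (hν : 0 < ν)
    (hf : ∀ x u (ε : ℝ), 0 < ε → f (dil r ε x) (dil q ε u) = dilPow r ε ν (f x u))
    (hℓ : ∀ x u (ε : ℝ), 0 < ε →
      ℓ (dil r ε x) (dil q ε u) = ENNReal.ofReal (ε ^ μ) * ℓ x u)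
    (D : Set (Fin n → ℝ)) (hD0 : (0 : Fin n → ℝ) ∉ D)
    (hDcov : ∀ x : Fin n → ℝ, x ≠ 0 → ∃ y ∈ D, ∃ ε : ℝ, 0 < ε ∧ x = dil r ε y)
    (V Vlo Vhi : ℕ → (Fin n → ℝ) → ℝ≥0∞)
    (hV0hom : ∀ x (ε : ℝ), 0 < ε → V 0 (dil r ε x) = ENNReal.ofReal (ε ^ μ) * V 0 x)
    (hlo0 : Vlo 0 = V 0) (hhi0 : Vhi 0 = V 0)
    (hV : ∀ i x, V (i + 1) x = ⨅ u : Fin m → ℝ, ℓ x u + V i (f x u))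
    (hloD : ∀ i, ∀ x ∈ D, Vlo (i + 1) x = ⨅ u : Fin m → ℝ, ℓ x u + Vlo i (f x u))
    (hhiD : ∀ i, ∀ x ∈ D, Vhi (i + 1) x = ⨅ u : Fin m → ℝ, ℓ x u + Vhi i (f x u))
    (hloScale : ∀ i, ∀ x ∈ D, ∀ ε : ℝ, 0 < ε →
      Vlo (i + 1) (dil r ε x)
        = ENNReal.ofReal (min (ε ^ μ) (ε ^ (μ * ν ^ (i + 1)))) * Vlo (i + 1) x)
    (hhiScale : ∀ i, ∀ x ∈ D, ∀ ε : ℝ, 0 < ε →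
      Vhi (i + 1) (dil r ε x)
        = ENNReal.ofReal (max (ε ^ μ) (ε ^ (μ * ν ^ (i + 1)))) * Vhi (i + 1) x)
    (hzero : ∀ i, V i 0 = 0 ∧ Vlo i 0 = 0 ∧ Vhi i 0 = 0)
    (hspecial : μ = 0 ∨ ν = 1) :
    ∀ (i : ℕ) (x : Fin n → ℝ), Vlo i x = V i x ∧ V i x = Vhi i x := by
  -- dil q ε is surjective for ε > 0
  have hsurj : ∀ ε : ℝ, 0 < ε → Function.Surjective (dil q ε) := by
    intro ε hε u
    refine ⟨dil q ε⁻¹ u, ?_⟩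
    funext j
    have hpos : (0:ℝ) < ε ^ (q j) := Real.rpow_pos_of_pos hε _
    simp only [dil, Real.inv_rpow hε.le]
    field_simp
  -- under the special hypothesis, (ε^ν)^μ = ε^μ
  have hkey : ∀ ε : ℝ, 0 < ε → (ε ^ ν) ^ μ = ε ^ μ := by
    intro ε hε
    rcases hspecial with h | h
    · simp [h]
    · simp [h]
  -- dilPow r ε ν = dil r (ε^ν)
  have hdp : ∀ (ε : ℝ), 0 < ε → ∀ z, dilPow r ε ν z = dil r (ε ^ ν) z := by
    intro ε hε z
    funext i
    simp only [dilPow, dil]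
    rw [Real.rpow_mul hε.le]
  -- V is μ-homogeneous at every iteration
  have hVhom : ∀ i x (ε : ℝ), 0 < ε →
      V i (dil r ε x) = ENNReal.ofReal (ε ^ μ) * V i x := by
    intro i
    induction i with
    | zero => exact hV0hom
    | succ i ih =>
      intro x ε hε
      rw [hV, hV]
      rw [← (hsurj ε hε).iInf_comp (g := fun u => ℓ (dil r ε x) u + V i (f (dil r ε x) u))]
      have : ∀ u, ℓ (dil r ε x) (dil q ε u) + V i (f (dil r ε x) (dil q ε u))
          = ENNReal.ofReal (ε ^ μ) * (ℓ x u + V i (f x u)) := by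
        intro u
        rw [hℓ x u ε hε, hf x u ε hε, hdp ε hε,
          ih _ _ (Real.rpow_pos_of_pos hε ν), hkey ε hε, mul_add]
      simp only [this]
      rw [ENNReal.mul_iInf_of_ne (by simp [ENNReal.ofReal_eq_zero, not_le, Real.rpow_pos_of_pos hε]) ENNReal.ofReal_ne_top]
  -- the exponents coincide
  have hexp : ∀ i : ℕ, μ * ν ^ (i + 1) = μ := by
    intro i
    rcases hspecial with h | h
    · simp [h]
    · simp [h]
  intro i
  induction i with
  | zero => intro x; simp [hlo0, hhi0]
  | succ i ih =>
    intro x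
    -- on D the recursions coincide
    have hD : ∀ y ∈ D, Vlo (i + 1) y = V (i + 1) y ∧ V (i + 1) y = Vhi (i + 1) y := by
      intro y hy
      constructor
      · rw [hloD i y hy, hV]
        exact iInf_congr fun u => by rw [(ih (f y u)).1]
      · rw [hhiD i y hy, hV]
        exact iInf_congr fun u => by rw [(ih (f y u)).2]
    by_cases hx : x = 0
    · subst hx
      obtain ⟨h1, h2, h3⟩ := hzero (i + 1)
      exact ⟨h2.trans h1.symm, h1.trans h3.symm⟩
    · obtain ⟨y, hy, ε, hε, rfl⟩ := hDcov x hx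
      have hmin : min (ε ^ μ) (ε ^ (μ * ν ^ (i + 1))) = ε ^ μ := by
        rw [hexp i, min_self]
      have hmax : max (ε ^ μ) (ε ^ (μ * ν ^ (i + 1))) = ε ^ μ := by
        rw [hexp i, max_self]
      constructor
      · rw [hloScale i y hy ε hε, hmin, (hD y hy).1, ← hVhom (i + 1) y ε hε]
      · rw [hhiScale i y hy ε hε, hmax, ← (hD y hy).2, ← hVhom (i + 1) y ε hε]
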